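/- Suppose S is an ε-subspace embedding for the n×p full-rank matrix X with 0 < ε < 0.5. Let β_F = (XᵀX)⁻¹Xᵀy, X̃ = SX, and β_P = (X̃ᵀX̃)⁻¹Xᵀy. Then ‖β_P − β_F‖₂² ≤ (4ε²/σ_min²(X)) · MSS_F, where MSS_F = ‖Xβ_F‖₂² and σ_min(X) is the smallest singular value of X. -/

import Mathlib

open Matrix Finset

/-- A `k × n` matrix `S` is an ε-subspace embedding for an `n × d` matrix `A`. -/
def IsSubspaceEmbedding {k n d : ℕ} (S : Matrix (Fin k) (Fin n) ℝ)
    (A : Matrix (Fin n) (Fin d) ℝ) (ε : ℝ) : Prop :=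
  ∀ z : Fin d → ℝ,
    (1 - ε) * ∑ i, (A.mulVec z i) ^ 2 ≤ ∑ i, ((S * A).mulVec z i) ^ 2 ∧
      ∑ i, ((S * A).mulVec z i) ^ 2 ≤ (1 + ε) * ∑ i, (A.mulVec z i) ^ 2

/- ### Auxiliary lemmas -/

lemma sq_sum_pos' {n : ℕ} {v : Fin n → ℝ} (hv : v ≠ 0) : 0 < ∑ i, v i ^ 2 := by
  have : ∃ i, v i ≠ 0 := by
    by_contra h; push_neg at h; exact hv (funext h)
  obtain ⟨i, hi⟩ := this
  exact Finset.sum_pos' (fun j _ => sq_nonneg _) ⟨i, Finset.mem_univ i, by positivity⟩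

lemma dot_self_eq_sum_sq {n : ℕ} (v : Fin n → ℝ) : v ⬝ᵥ v = ∑ i, v i ^ 2 := by
  simp [dotProduct, sq]

lemma bilin_eq {n p : ℕ} (A : Matrix (Fin n) (Fin p) ℝ) (u v : Fin p → ℝ) :
    u ⬝ᵥ ((Aᵀ * A) *ᵥ v) = (A *ᵥ u) ⬝ᵥ (A *ᵥ v) := by
  rw [← Matrix.mulVec_mulVec, Matrix.dotProduct_mulVec, Matrix.vecMul_transpose]

lemma four_mul_dot {n p : ℕ} (A : Matrix (Fin n) (Fin p) ℝ) (u v : Fin p → ℝ) :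
    (∑ i, (A.mulVec (u + v) i) ^ 2) - (∑ i, (A.mulVec (u - v) i) ^ 2)
      = 4 * ((A *ᵥ u) ⬝ᵥ (A *ᵥ v)) := by
  simp only [Matrix.mulVec_add, Matrix.mulVec_sub, Pi.add_apply, Pi.sub_apply, dotProduct,
    Finset.mul_sum]
  rw [← Finset.sum_sub_distrib]
  exact Finset.sum_congr rfl (fun i _ => by ring)

lemma parallelogram_sum {n p : ℕ} (A : Matrix (Fin n) (Fin p) ℝ) (u v : Fin p → ℝ) :
    (∑ i, (A.mulVec (u + v) i) ^ 2) + (∑ i, (A.mulVec (u - v) i) ^ 2)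
      = 2 * (∑ i, (A.mulVec u i) ^ 2) + 2 * (∑ i, (A.mulVec v i) ^ 2) := by
  simp only [Matrix.mulVec_add, Matrix.mulVec_sub, Pi.add_apply, Pi.sub_apply,
    Finset.mul_sum]
  rw [← Finset.sum_add_distrib, ← Finset.sum_add_distrib]
  exact Finset.sum_congr rfl (fun i _ => by ring)

lemma smul_sum_sq {n p : ℕ} (A : Matrix (Fin n) (Fin p) ℝ) (t : ℝ) (w : Fin p → ℝ) :
    ∑ i, (A.mulVec (t • w) i) ^ 2 = t ^ 2 * ∑ i, (A.mulVec w i) ^ 2 := by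
  simp only [Matrix.mulVec_smul, Pi.smul_apply, smul_eq_mul, Finset.mul_sum]
  exact Finset.sum_congr rfl (fun i _ => by ring)

lemma smul_dot_cancel {n p : ℕ} (A : Matrix (Fin n) (Fin p) ℝ) {t : ℝ} (ht : t ≠ 0)
    (u v : Fin p → ℝ) :
    (A *ᵥ (t • u)) ⬝ᵥ (A *ᵥ (t⁻¹ • v)) = (A *ᵥ u) ⬝ᵥ (A *ᵥ v) := by
  simp only [Matrix.mulVec_smul, smul_dotProduct, dotProduct_smul, smul_eq_mul, ← mul_assoc,
    inv_mul_cancel₀ ht, mul_inv_cancel₀ ht, one_mul]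

/-- Polarization bound for a subspace embedding. -/
lemma polar_bound {k n p : ℕ} {ε : ℝ} {S : Matrix (Fin k) (Fin n) ℝ}
    {X : Matrix (Fin n) (Fin p) ℝ} (hS : IsSubspaceEmbedding S X ε) (u v : Fin p → ℝ) :
    (X *ᵥ u) ⬝ᵥ (X *ᵥ v) - ((S * X) *ᵥ u) ⬝ᵥ ((S * X) *ᵥ v)
      ≤ (ε / 2) * ((∑ i, (X.mulVec u i) ^ 2) + (∑ i, (X.mulVec v i) ^ 2)) := by
  obtain ⟨h1, -⟩ := hS (u + v)
  obtain ⟨-, h2⟩ := hS (u - v)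
  have f4 := four_mul_dot X u v
  have g4 := four_mul_dot (S * X) u v
  have fp := parallelogram_sum X u v
  have fp2 : ε * ((∑ i, (X.mulVec (u + v) i) ^ 2) + (∑ i, (X.mulVec (u - v) i) ^ 2))
      = ε * (2 * (∑ i, (X.mulVec u i) ^ 2) + 2 * (∑ i, (X.mulVec v i) ^ 2)) := by rw [fp]
  nlinarith [h1, h2, f4, g4, fp2]

lemma quad_diag {p : ℕ} (V : Matrix (Fin p) (Fin p) ℝ) (d : Fin p → ℝ) (w : Fin p → ℝ) :
    w ⬝ᵥ ((V * Matrix.diagonal d * Vᵀ) *ᵥ w) = ∑ i, d i * ((Vᵀ *ᵥ w) i) ^ 2 := by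
  rw [← Matrix.mulVec_mulVec, Matrix.dotProduct_mulVec, ← Matrix.vecMul_vecMul]
  simp only [dotProduct, Matrix.diagonal_transpose, Matrix.mulVec_diagonal,
    Matrix.mulVec_transpose, Matrix.vecMul_diagonal]
  exact Finset.sum_congr rfl (fun i _ => by ring)

lemma unitary_norm {p : ℕ} (V : Matrix (Fin p) (Fin p) ℝ) (hVVt : V * Vᵀ = 1) (w : Fin p → ℝ) :
    ∑ i, ((Vᵀ *ᵥ w) i) ^ 2 = ∑ j, w j ^ 2 := by
  rw [← dot_self_eq_sum_sq, ← dot_self_eq_sum_sq]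
  rw [Matrix.mulVec_transpose, ← Matrix.dotProduct_mulVec, ← Matrix.mulVec_transpose,
    Matrix.mulVec_mulVec, hVVt, Matrix.one_mulVec]

/-- Rayleigh quotient lower bound: `λmin ‖w‖² ≤ wᵀ M w` for a Hermitian real matrix. -/
lemma rayleigh_lower {p : ℕ} [Nonempty (Fin p)] {M : Matrix (Fin p) (Fin p) ℝ}
    (hM : M.IsHermitian) (w : Fin p → ℝ) :
    (⨅ i, hM.eigenvalues i) * ∑ j, w j ^ 2 ≤ w ⬝ᵥ (M *ᵥ w) := by
  set V : Matrix (Fin p) (Fin p) ℝ := (hM.eigenvectorUnitary : Matrix (Fin p) (Fin p) ℝ)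
    with hV
  have hmem : V ∈ Matrix.unitaryGroup (Fin p) ℝ := hM.eigenvectorUnitary.2
  have hstar : star V = Vᵀ := by
    rw [Matrix.star_eq_conjTranspose]
    ext i j; simp [Matrix.conjTranspose_apply]
  have hVVt : V * Vᵀ = 1 := by
    have h := (Matrix.mem_unitaryGroup_iff).mp hmem
    rwa [hstar] at h
  have hdiag : (RCLike.ofReal ∘ hM.eigenvalues : Fin p → ℝ) = hM.eigenvalues := by
    funext i; simp
  have hMeq : M = V * Matrix.diagonal hM.eigenvalues * Vᵀ := by
    rw [← hstar, ← hdiag]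
    exact hM.spectral_theorem
  conv_rhs => rw [hMeq]
  rw [quad_diag, ← unitary_norm V hVVt w, Finset.mul_sum]
  refine Finset.sum_le_sum (fun i _ => ?_)
  exact mul_le_mul_of_nonneg_right
    (ciInf_le (Set.Finite.bddBelow (Set.finite_range _)) i) (sq_nonneg _)

/-- Worst-case bound for partial sketching: if `S` is an ε-subspace embedding for the full
column-rank matrix `X` with `0 < ε < 0.5`, then
`‖β_P − β_F‖² ≤ (4ε²/σ_min²(X)) MSS_F`, where `σ_min²(X)` is the smallest eigenvalue of `XᵀX`
(the square of the smallest singular value of `X`) and `MSS_F = ‖Xβ_F‖²`. -/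
theorem partial_sketching_worst_case {k n p : ℕ} (ε : ℝ)
    (S : Matrix (Fin k) (Fin n) ℝ) (y : Fin n → ℝ) (X : Matrix (Fin n) (Fin p) ℝ)
    (hε : 0 < ε) (hε2 : ε < 0.5) (hrank : X.rank = p)
    (hS : IsSubspaceEmbedding S X ε) :
    let βF := (Xᵀ * X)⁻¹.mulVec (Xᵀ.mulVec y)
    let βP := (((S * X)ᵀ * (S * X))⁻¹).mulVec (Xᵀ.mulVec y)
    let MSSF := ∑ i, (X.mulVec βF i) ^ 2
    let σminSq := ⨅ i, (Matrix.isHermitian_conjTranspose_mul_self X).eigenvalues i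
    ∑ j, (βP j - βF j) ^ 2 ≤ (4 * ε ^ 2 / σminSq) * MSSF := by
  intro βF βP MSSF σminSq
  rcases Nat.eq_zero_or_pos p with hp | hp
  · subst hp
    simp [σminSq, MSSF, Real.iInf_of_isEmpty]
  haveI : Nonempty (Fin p) := ⟨⟨0, hp⟩⟩
  -- X *ᵥ z = 0 → z = 0
  have hXinj : ∀ z : Fin p → ℝ, X *ᵥ z = 0 → z = 0 := by
    intro z hz
    have hker : LinearMap.ker X.mulVecLin = ⊥ := by
      have h1 := LinearMap.finrank_range_add_finrank_ker X.mulVecLin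
      rw [show Module.finrank ℝ (LinearMap.range X.mulVecLin) = p from hrank] at h1
      simp only [Module.finrank_fintype_fun_eq_card, Fintype.card_fin] at h1
      have : Module.finrank ℝ (LinearMap.ker X.mulVecLin) = 0 := by omega
      exact Submodule.finrank_eq_zero.mp this
    have : z ∈ LinearMap.ker X.mulVecLin := by simpa [Matrix.mulVecLin_apply] using hz
    simpa [hker] using this
  have hqpos : ∀ z : Fin p → ℝ, z ≠ 0 → 0 < ∑ i, (X.mulVec z i) ^ 2 := by
    intro z hz
    refine sq_sum_pos' (fun h => hz (hXinj z h))
  -- positive definiteness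
  have hMpos : (Xᵀ * X).PosDef := by
    refine Matrix.posDef_iff_dotProduct_mulVec.mpr ⟨Matrix.isHermitian_conjTranspose_mul_self X, fun x hx => ?_⟩
    have hsx : star x = x := by simp
    rw [hsx, bilin_eq, dot_self_eq_sum_sq]
    exact hqpos x hx
  have hMtpos : ((S * X)ᵀ * (S * X)).PosDef := by
    refine Matrix.posDef_iff_dotProduct_mulVec.mpr ⟨Matrix.isHermitian_conjTranspose_mul_self (S * X), fun x hx => ?_⟩
    obtain ⟨h1, -⟩ := hS x
    have hq := hqpos x hx
    have hsx : star x = x := by simp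
    rw [hsx, bilin_eq, dot_self_eq_sum_sq]
    exact lt_of_lt_of_le (by nlinarith) h1
  have hMdet : IsUnit (Xᵀ * X).det := (Matrix.isUnit_iff_isUnit_det _).mp hMpos.isUnit
  have hMtdet : IsUnit ((S * X)ᵀ * (S * X)).det :=
    (Matrix.isUnit_iff_isUnit_det _).mp hMtpos.isUnit
  -- normal equations
  have hMβF : (Xᵀ * X) *ᵥ βF = Xᵀ *ᵥ y := by
    show (Xᵀ * X) *ᵥ ((Xᵀ * X)⁻¹ *ᵥ (Xᵀ *ᵥ y)) = Xᵀ *ᵥ y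
    rw [Matrix.mulVec_mulVec, Matrix.mul_nonsing_inv _ hMdet, Matrix.one_mulVec]
  have hMtβP : ((S * X)ᵀ * (S * X)) *ᵥ βP = Xᵀ *ᵥ y := by
    show ((S * X)ᵀ * (S * X)) *ᵥ (((S * X)ᵀ * (S * X))⁻¹ *ᵥ (Xᵀ *ᵥ y)) = Xᵀ *ᵥ y
    rw [Matrix.mulVec_mulVec, Matrix.mul_nonsing_inv _ hMtdet, Matrix.one_mulVec]
  set w : Fin p → ℝ := βP - βF with hw
  have hE : ((S * X)ᵀ * (S * X)) *ᵥ w = (Xᵀ * X) *ᵥ βF - ((S * X)ᵀ * (S * X)) *ᵥ βF := by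
    rw [hw, Matrix.mulVec_sub, hMtβP, hMβF]
  -- qt w = (Xw)⬝(XβF) − (SXw)⬝(SXβF)
  have e1 : ∑ i, ((S * X).mulVec w i) ^ 2
      = (X *ᵥ w) ⬝ᵥ (X *ᵥ βF) - ((S * X) *ᵥ w) ⬝ᵥ ((S * X) *ᵥ βF) := by
    rw [← dot_self_eq_sum_sq, ← bilin_eq, hE, dotProduct_sub, bilin_eq, bilin_eq]
  -- scaling
  set t : ℝ := Real.sqrt (1 / (2 * ε)) with htdef
  have htpos : 0 < t := Real.sqrt_pos.mpr (by positivity)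
  have ht2 : t ^ 2 = 1 / (2 * ε) := Real.sq_sqrt (by positivity)
  have hti2 : (t⁻¹) ^ 2 = 2 * ε := by
    rw [inv_pow, ht2]; field_simp
  set a : ℝ := ∑ i, (X.mulVec w i) ^ 2 with ha
  set c : ℝ := ∑ i, (X.mulVec βF i) ^ 2 with hc
  have hann : 0 ≤ a := Finset.sum_nonneg (fun i _ => sq_nonneg _)
  have hcnn : 0 ≤ c := Finset.sum_nonneg (fun i _ => sq_nonneg _)
  -- polarization applied to scaled vectors
  have e2 : (X *ᵥ w) ⬝ᵥ (X *ᵥ βF) - ((S * X) *ᵥ w) ⬝ᵥ ((S * X) *ᵥ βF)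
      ≤ (ε / 2) * (t ^ 2 * a + (t⁻¹) ^ 2 * c) := by
    have := polar_bound hS (t • w) (t⁻¹ • βF)
    rw [smul_dot_cancel X (ne_of_gt htpos), smul_dot_cancel (S * X) (ne_of_gt htpos),
      smul_sum_sq, smul_sum_sq] at this
    exact this
  have e3 : (1 - ε) * a ≤ ∑ i, ((S * X).mulVec w i) ^ 2 := (hS w).1
  -- combine: a ≤ 4 ε² c
  have habound : a ≤ 4 * ε ^ 2 * c := by
    rw [ht2, hti2] at e2
    have hmain : (1 - ε) * a ≤ (ε / 2) * (1 / (2 * ε) * a + 2 * ε * c) := by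
      calc (1 - ε) * a ≤ _ := e3
        _ = _ := e1
        _ ≤ _ := e2
    have hsimp : (ε / 2) * (1 / (2 * ε) * a + 2 * ε * c) = a / 4 + ε ^ 2 * c := by
      field_simp; ring
    rw [hsimp] at hmain
    nlinarith [mul_nonneg hann (by linarith : (0:ℝ) ≤ 2 - 4 * ε)]
  -- Rayleigh bound
  have hray : σminSq * ∑ j, w j ^ 2 ≤ a := by
    have h := rayleigh_lower (Matrix.isHermitian_conjTranspose_mul_self X) w
    have hconv : Xᴴ = Xᵀ := by ext i j; simp [Matrix.conjTranspose_apply]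
    have h2 : w ⬝ᵥ (Xᴴ * X) *ᵥ w = a := by
      rw [hconv, bilin_eq, dot_self_eq_sum_sq]
    calc σminSq * ∑ j, w j ^ 2 ≤ w ⬝ᵥ (Xᴴ * X) *ᵥ w := h
      _ = a := h2
  have hσpos : 0 < σminSq := by
    obtain ⟨i, hi⟩ := exists_eq_ciInf_of_finite
      (f := (Matrix.isHermitian_conjTranspose_mul_self X).eigenvalues)
    rw [show σminSq = (Matrix.isHermitian_conjTranspose_mul_self X).eigenvalues i from hi.symm]
    exact hMpos.eigenvalues_pos i
  have hgoal : ∑ j, w j ^ 2 ≤ (4 * ε ^ 2 / σminSq) * c := by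
    rw [div_mul_eq_mul_div, le_div_iff₀ hσpos]
    calc (∑ j, w j ^ 2) * σminSq = σminSq * ∑ j, w j ^ 2 := by ring
      _ ≤ a := hray
      _ ≤ 4 * ε ^ 2 * c := habound
  have : ∑ j, (βP j - βF j) ^ 2 = ∑ j, w j ^ 2 := by
    exact Finset.sum_congr rfl (fun j _ => by rw [hw]; simp)
  rw [this]
  exact hgoal
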